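/- arXiv:1610.03858 — 2 statements merged into one kernel-verified Lean document; each statement's English description precedes it below -/
import Mathlib

section
/- Let n be a natural number, let C be a closed cone in ℝⁿ (i.e., C is topologically closed and t·z ∈ C whenever z ∈ C and t ≥ 0), and let ℓ : ℝⁿ → ℝ be a linear map such that ℓ(z) > 0 for every z ∈ C with z ≠ 0. Then for every real number M ≥ 0, the set of lattice points { z ∈ C ∩ ℤⁿ : ℓ(z) ≤ M } is finite, where ℤⁿ denotes the set of points of ℝⁿ all of whose coordinates are integers. -/
lemma abs_coord_le_norm' {n : ℕ} (z : EuclideanSpace ℝ (Fin n)) (i : Fin n) :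
    |z i| ≤ ‖z‖ := by
  rw [EuclideanSpace.norm_eq]
  rw [show |z i| = Real.sqrt (‖z i‖ ^ 2) by
    rw [Real.norm_eq_abs, sq_abs, Real.sqrt_sq_eq_abs]]
  apply Real.sqrt_le_sqrt
  exact Finset.single_le_sum (f := fun j => ‖z j‖ ^ 2) (fun j _ => sq_nonneg _)
    (Finset.mem_univ i)

/-- Lattice points in a sublevel set of a positive linear functional on a closed
cone in ℝⁿ form a finite set. -/
theorem finite_lattice_points_in_sublevel
    (n : ℕ) (C : Set (EuclideanSpace ℝ (Fin n)))
    (hC_closed : IsClosed C)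
    (hC_cone : ∀ z ∈ C, ∀ t : ℝ, 0 ≤ t → t • z ∈ C)
    (ℓ : EuclideanSpace ℝ (Fin n) →ₗ[ℝ] ℝ)
    (hpos : ∀ z ∈ C, z ≠ 0 → 0 < ℓ z)
    (M : ℝ) (hM : 0 ≤ M) :
    {z : EuclideanSpace ℝ (Fin n) |
      z ∈ C ∧ (∀ i : Fin n, ∃ k : ℤ, z i = (k : ℝ)) ∧ ℓ z ≤ M}.Finite := by
  set S := {z : EuclideanSpace ℝ (Fin n) |
      z ∈ C ∧ (∀ i : Fin n, ∃ k : ℤ, z i = (k : ℝ)) ∧ ℓ z ≤ M} with hS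
  have hcont : Continuous ℓ := ℓ.continuous_of_finiteDimensional
  -- Step 1: S is norm-bounded by some R ≥ 0.
  obtain ⟨R, hR0, hR⟩ : ∃ R : ℝ, 0 ≤ R ∧ ∀ z ∈ S, ‖z‖ ≤ R := by
    by_cases hK : (C ∩ Metric.sphere (0 : EuclideanSpace ℝ (Fin n)) 1).Nonempty
    · have hKc : IsCompact (C ∩ Metric.sphere (0 : EuclideanSpace ℝ (Fin n)) 1) :=
        (isCompact_sphere 0 1).inter_left hC_closed
      obtain ⟨z0, hz0, hmin'⟩ := hKc.exists_isMinOn hK hcont.continuousOn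
      have hmin : ∀ w ∈ C ∩ Metric.sphere (0 : EuclideanSpace ℝ (Fin n)) 1, ℓ z0 ≤ ℓ w :=
        fun w hw => hmin' hw
      have hz0n : ‖z0‖ = 1 := by simpa using hz0.2
      have hεpos : 0 < ℓ z0 := hpos z0 hz0.1 (by
        intro h; rw [h] at hz0n; simp at hz0n)
      refine ⟨M / ℓ z0, div_nonneg hM hεpos.le, ?_⟩
      intro z hz
      rcases eq_or_ne z 0 with rfl | hzne
      · simpa using div_nonneg hM hεpos.le
      · have hznpos : (0:ℝ) < ‖z‖ := norm_pos_iff.mpr hzne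
        have hu : (‖z‖⁻¹ • z) ∈ C ∩ Metric.sphere 0 1 := by
          constructor
          · exact hC_cone z hz.1 _ (inv_nonneg.mpr hznpos.le)
          · simp [norm_smul, abs_of_pos (inv_pos.mpr hznpos),
              inv_mul_cancel₀ hznpos.ne']
        have h1 : ℓ z0 ≤ ℓ (‖z‖⁻¹ • z) := hmin _ hu
        have h2 : ℓ (‖z‖⁻¹ • z) = ‖z‖⁻¹ * ℓ z := by
          simp [map_smul]
        rw [h2] at h1
        rw [le_div_iff₀ hεpos]
        calc ‖z‖ * ℓ z0 ≤ ‖z‖ * (‖z‖⁻¹ * ℓ z) := by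
              exact mul_le_mul_of_nonneg_left h1 hznpos.le
          _ = ℓ z := by field_simp
          _ ≤ M := hz.2.2
    · refine ⟨0, le_refl _, ?_⟩
      intro z hz
      rcases eq_or_ne z 0 with rfl | hzne
      · simp
      · exfalso
        have hznpos : (0:ℝ) < ‖z‖ := norm_pos_iff.mpr hzne
        exact hK ⟨‖z‖⁻¹ • z, hC_cone z hz.1 _ (inv_nonneg.mpr hznpos.le), by
          simp [norm_smul, abs_of_pos (inv_pos.mpr hznpos),
            inv_mul_cancel₀ hznpos.ne']⟩
  -- Step 2: map to integer vectors via floor.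
  set f : EuclideanSpace ℝ (Fin n) → (Fin n → ℤ) := fun z i => ⌊z i⌋ with hf
  have hfix : ∀ z ∈ S, ∀ i, (f z i : ℝ) = z i := by
    intro z hz i
    obtain ⟨k, hk⟩ := hz.2.1 i
    simp [hf, hk]
  have hinj : Set.InjOn f S := by
    intro z hz w hw h
    ext i
    have : (f z i : ℝ) = (f w i : ℝ) := by rw [h]
    rw [hfix z hz i, hfix w hw i] at this
    exact this
  apply Set.Finite.of_finite_image _ hinj
  have hTfin : (Set.pi Set.univ fun _ : Fin n => Set.Icc (-⌈R⌉) ⌈R⌉).Finite :=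
    Set.Finite.pi fun _ => Set.finite_Icc _ _
  apply hTfin.subset
  rintro g ⟨z, hz, rfl⟩
  intro i _
  have hbound : |z i| ≤ R := (abs_coord_le_norm' z i).trans (hR z hz)
  have hzi : (f z i : ℝ) = z i := hfix z hz i
  constructor
  · have : (-⌈R⌉ : ℝ) ≤ (f z i : ℝ) := by
      rw [hzi]
      calc (-(⌈R⌉:ℝ)) ≤ -R := by linarith [Int.le_ceil R]
        _ ≤ z i := neg_le_of_abs_le hbound
    exact_mod_cast this
  · have : ((f z i : ℤ) : ℝ) ≤ (⌈R⌉ : ℝ) := by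
      rw [hzi]
      calc z i ≤ R := le_of_abs_le hbound
        _ ≤ ⌈R⌉ := Int.le_ceil R
    exact_mod_cast this
end

section
/- Let F be an algebraically closed field, let K be a field equipped with an F-algebra structure (so that the structure map F → K is an injective ring homomorphism), and let σ : K → K be an F-algebra homomorphism. Suppose there exist an integer m ≥ 1 and an element f ∈ K such that σ^m(f) = f (where σ^m denotes the m-fold composition of σ) and f does not lie in the image of F in K. Then there exists an element g ∈ K not lying in the image of F in K such that σ(g) = g. -/
open Polynomial

/-- Lemma 2.1 (algebraic core): if an F-algebra endomorphism σ of a field K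
fixes some non-constant element after m iterations, then σ itself fixes a
non-constant element. -/
theorem exists_nonconstant_fixed_of_iterate_fixed
    (F K : Type*) [Field F] [IsAlgClosed F] [Field K] [Algebra F K]
    (hinj : Function.Injective (algebraMap F K))
    (σ : K →ₐ[F] K)
    (m : ℕ) (hm : 1 ≤ m) (f : K)
    (hfix : (⇑σ)^[m] f = f)
    (hf : f ∉ Set.range (algebraMap F K)) :
    ∃ g : K, g ∉ Set.range (algebraMap F K) ∧ σ g = g := by
  set h : ℕ → K := fun i => (⇑σ)^[i] f with hh
  set P : K[X] := ∏ i ∈ Finset.range m, (X - C (h i)) with hP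
  -- σ fixes P coefficientwise
  have hmap : P.map σ.toRingHom = P := by
    rw [hP, Polynomial.map_prod]
    have h1 : ∀ i, (X - C (h i)).map σ.toRingHom = X - C (h (i + 1)) := by
      intro i
      simp [Polynomial.map_sub, hh, Function.iterate_succ_apply']
    simp only [h1]
    have key : (∏ i ∈ Finset.range m, (X - C (h (i + 1)))) * (X - C (h 0)) =
        (∏ i ∈ Finset.range m, (X - C (h i))) * (X - C (h 0)) := by
      rw [← Finset.prod_range_succ' (fun i => X - C (h i)) m,
        Finset.prod_range_succ]
      have : h m = h 0 := by simpa [hh] using hfix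
      rw [this]
    exact mul_right_cancel₀ (X_sub_C_ne_zero (h 0)) key
  have hfixcoeff : ∀ n, σ (P.coeff n) = P.coeff n := by
    intro n
    conv_rhs => rw [← hmap]
    rw [Polynomial.coeff_map]; rfl
  by_cases hc : ∀ n, P.coeff n ∈ Set.range (algebraMap F K)
  · -- all coefficients constant: contradiction, f would be constant
    exfalso
    obtain ⟨Q, hQ⟩ := (Polynomial.mem_lifts P).1
      ((Polynomial.lifts_iff_coeff_lifts P).2 hc)
    have hPne : P ≠ 0 := by
      rw [hP]
      exact Finset.prod_ne_zero_iff.2 fun i _ => X_sub_C_ne_zero (h i)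
    have hQne : Q ≠ 0 := by
      rintro rfl
      simp at hQ
      exact hPne hQ.symm
    have heval : P.eval f = 0 := by
      rw [hP, Polynomial.eval_prod]
      refine Finset.prod_eq_zero (Finset.mem_range.2 hm) ?_
      simp [hh]
    have hfroot : f ∈ (Q.map (algebraMap F K)).roots := by
      rw [hQ, Polynomial.mem_roots hPne]
      exact heval
    rw [(IsAlgClosed.splits Q).roots_map_of_injective hinj] at hfroot
    obtain ⟨a, _, ha⟩ := Multiset.mem_map.1 hfroot
    exact hf ⟨a, ha⟩
  · push_neg at hc
    obtain ⟨n, hn⟩ := hc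
    exact ⟨P.coeff n, hn, hfixcoeff n⟩
end
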